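/- Let H be an elementary abelian group of order 8 and let h : ℤ/7ℤ → H∖{e} be a bijection such that for every nonzero i ∈ ℤ/7ℤ, the map j ↦ h_j · h_{j+i} is a bijection from ℤ/7ℤ onto H∖{e}. Then the permutation of H fixing e and sending h_i to h_{i+1} for every i ∈ ℤ/7ℤ is an automorphism of H. -/

import Mathlib

set_option maxRecDepth 40000

namespace Stmt8Aux

abbrev Vec := Fin 3 → ZMod 2

def dot (w x : Vec) : ZMod 2 := w 0 * x 0 + w 1 * x 1 + w 2 * x 2

lemma dot_add (w x y : Vec) : dot w (x + y) = dot w x + dot w y := by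
  simp only [dot, Pi.add_apply]; ring

def good1 (s : Finset (ZMod 7)) : Prop := ∃ t : ZMod 7, s = {t, t+1, t+3}
def good2 (s : Finset (ZMod 7)) : Prop := ∃ t : ZMod 7, s = {t, t+2, t+3}

instance : DecidablePred good1 := fun s => by unfold good1; infer_instance
instance : DecidablePred good2 := fun s => by unfold good2; infer_instance

lemma Dcount1 : ∀ w : Vec, w ≠ 0 →
    (Finset.univ.filter fun x : Vec => x ≠ 0 ∧ dot w x = 0).card = 3 := by decide

lemma Dcount2 : ∀ w w' : Vec, w ≠ 0 → w' ≠ 0 → w ≠ w' →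
    (Finset.univ.filter fun x : Vec => x ≠ 0 ∧ (dot w x = 0 ∧ dot w' x = 0)).card = 1 := by decide

lemma Dsep : ∀ x : Vec, (∀ w : Vec, w ≠ 0 → dot w x = 0) → x = 0 := by decide

lemma Dclass : ∀ s : Finset (ZMod 7), s.card = 3 →
    (∀ i : ZMod 7, i ≠ 0 → (s.filter fun j => j + i ∈ s).card = 1) →
    good1 s ∨ good2 s := by decide

lemma Dexcl : ∀ t t' : ZMod 7, ({t, t+1, t+3} : Finset (ZMod 7)) ≠ {t', t'+2, t'+3} := by decide

lemma DG1 : ∀ t2 : ZMod 7,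
    (Finset.univ.filter fun t : ZMod 7 =>
      (({t, t+1, t+3} : Finset (ZMod 7)) ∩ {t2, t2+2, t2+3}).card = 1).card = 3 := by decide

lemma DG2 : ∀ t1 : ZMod 7,
    (Finset.univ.filter fun t : ZMod 7 =>
      (({t, t+2, t+3} : Finset (ZMod 7)) ∩ {t1, t1+1, t1+3}).card = 1).card = 3 := by decide

lemma Dshift1 : ∀ t j : ZMod 7,
    (j ∈ ({t-1, t, t+2} : Finset (ZMod 7))) ↔ (j+1 ∈ ({t, t+1, t+3} : Finset (ZMod 7))) := by decide

lemma Dshift2 : ∀ t j : ZMod 7,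
    (j ∈ ({t-1, t+1, t+2} : Finset (ZMod 7))) ↔ (j+1 ∈ ({t, t+2, t+3} : Finset (ZMod 7))) := by decide

lemma Dzmod2 : ∀ a b : ZMod 2, (a + b = 0 ↔ (a = 0 ↔ b = 0)) := by decide
lemma Dzmod2' : ∀ a b : ZMod 2, (a = 0 ↔ b = 0) → a = b := by decide
lemma Dvecsz : (Finset.univ.filter fun w : Vec => w ≠ 0).card = 7 := by decide

lemma transfer {V' : Type*} [DecidableEq V'] [Fintype V'] {u : ZMod 7 → V'} {z : V'}
    (hu : Set.BijOn u Set.univ {x | x ≠ z}) (q : V' → Prop) [DecidablePred q] :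
    (Finset.univ.filter fun j => q (u j)).card
      = (Finset.univ.filter fun x => x ≠ z ∧ q x).card := by
  apply Finset.card_bij (fun j _ => u j)
  · intro a ha
    rw [Finset.mem_filter] at ha ⊢
    exact ⟨Finset.mem_univ _, hu.mapsTo (Set.mem_univ a), ha.2⟩
  · intro a _ b _ hab
    exact hu.injOn (Set.mem_univ a) (Set.mem_univ b) hab
  · intro x hx
    rw [Finset.mem_filter] at hx
    obtain ⟨j, -, hj⟩ := hu.surjOn hx.2.1
    exact ⟨j, Finset.mem_filter.mpr ⟨Finset.mem_univ _, by rw [hj]; exact hx.2.2⟩, hj⟩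

noncomputable def rep1 (s : Finset (ZMod 7)) : ZMod 7 :=
  if h : good1 s then h.choose else 0
noncomputable def rep2 (s : Finset (ZMod 7)) : ZMod 7 :=
  if h : good2 s then h.choose else 0

lemma rep1_spec {s : Finset (ZMod 7)} (h : good1 s) :
    s = {rep1 s, rep1 s + 1, rep1 s + 3} := by
  rw [rep1, dif_pos h]; exact h.choose_spec

lemma rep2_spec {s : Finset (ZMod 7)} (h : good2 s) :
    s = {rep2 s, rep2 s + 2, rep2 s + 3} := by
  rw [rep2, dif_pos h]; exact h.choose_spec

lemma dichotomy (F : Finset (Finset (ZMod 7))) (h7 : 7 ≤ F.card)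
    (hg : ∀ s ∈ F, good1 s ∨ good2 s)
    (hint : ∀ s ∈ F, ∀ t ∈ F, s ≠ t → (s ∩ t).card = 1) :
    (∀ s ∈ F, good1 s) ∨ (∀ s ∈ F, good2 s) := by
  by_contra hc
  push_neg at hc
  obtain ⟨⟨s2, hs2F, hs2⟩, ⟨s1, hs1F, hs1⟩⟩ := hc
  have hg2 : good2 s2 := (hg s2 hs2F).resolve_left hs2
  have hg1 : good1 s1 := (hg s1 hs1F).resolve_right hs1
  obtain ⟨t1, rfl⟩ := hg1
  obtain ⟨t2, rfl⟩ := hg2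
  set F1 := F.filter good1 with hF1
  set F2 := F.filter good2 with hF2
  have hcover : F ⊆ F1 ∪ F2 := by
    intro s hs
    rcases hg s hs with hgood | hgood
    · exact Finset.mem_union_left _ (Finset.mem_filter.mpr ⟨hs, hgood⟩)
    · exact Finset.mem_union_right _ (Finset.mem_filter.mpr ⟨hs, hgood⟩)
  have hcards : 7 ≤ F1.card + F2.card :=
    le_trans h7 (le_trans (Finset.card_le_card hcover) (Finset.card_union_le _ _))
  have hb1 : F1.card ≤ 3 := by
    rw [← DG1 t2]
    apply Finset.card_le_card_of_injOn rep1
    · intro s hs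
      rw [hF1, Finset.mem_coe, Finset.mem_filter] at hs
      have hrep := rep1_spec hs.2
      rw [Finset.mem_coe, Finset.mem_filter]
      refine ⟨Finset.mem_univ _, ?_⟩
      rw [← hrep]
      apply hint s hs.1 _ hs2F
      intro he
      obtain ⟨a, ha⟩ := hs.2
      rw [ha] at he
      exact Dexcl a t2 he
    · intro s hs s' hs' he
      rw [hF1, Finset.coe_filter, Set.mem_setOf_eq] at hs hs'
      rw [rep1_spec hs.2, rep1_spec hs'.2, he]
  have hb2 : F2.card ≤ 3 := by
    rw [← DG2 t1]
    apply Finset.card_le_card_of_injOn rep2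
    · intro s hs
      rw [hF2, Finset.mem_coe, Finset.mem_filter] at hs
      have hrep := rep2_spec hs.2
      rw [Finset.mem_coe, Finset.mem_filter]
      refine ⟨Finset.mem_univ _, ?_⟩
      rw [← hrep]
      apply hint s hs.1 _ hs1F
      intro he
      obtain ⟨a, ha⟩ := hs.2
      rw [ha] at he
      exact Dexcl t1 a he.symm
    · intro s hs s' hs' he
      rw [hF2, Finset.coe_filter, Set.mem_setOf_eq] at hs hs'
      rw [rep2_spec hs.2, rep2_spec hs'.2, he]
  omega

end Stmt8Aux

open Stmt8Aux in
set_option maxHeartbeats 1000000 in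
theorem stmt_8 (H : Type*) [CommGroup H] [Fintype H]
    (hcard : Fintype.card H = 8) (hexp : ∀ x : H, x * x = 1)
    (h : ZMod 7 → H) (hbij : Set.BijOn h Set.univ {x : H | x ≠ 1})
    (hprod : ∀ i : ZMod 7, i ≠ 0 →
      Set.BijOn (fun j : ZMod 7 => h j * h (j + i)) Set.univ {x : H | x ≠ 1}) :
    ∃ f : MulAut H, ∀ i : ZMod 7, f (h i) = h (i + 1) := by
  -- Step 1: H as a ZMod 2 vector space of dimension 3
  have hA : ∀ x : Additive H, (2 : ℕ) • x = 0 := by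
    intro x
    show (2 : ℕ) • (x : Additive H) = 0
    rw [two_nsmul]
    exact hexp x.toMul
  letI : Module (ZMod 2) (Additive H) := AddCommGroup.zmodModule hA
  haveI : Module.Finite (ZMod 2) (Additive H) := Module.Finite.of_finite
  have hcardA : Fintype.card (Additive H) = 8 :=
    (Fintype.card_congr (Additive.toMul (α := H)) ▸ hcard : _)
  have hrank : Module.finrank (ZMod 2) (Additive H) = 3 := by
    have hpow := Module.card_eq_pow_finrank (K := ZMod 2) (V := Additive H)
    rw [hcardA, ZMod.card] at hpow
    have h8 : (2:ℕ) ^ Module.finrank (ZMod 2) (Additive H) = 2 ^ 3 := by omega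
    exact Nat.pow_right_injective (by norm_num) h8
  let b : Module.Basis (Fin 3) (ZMod 2) (Additive H) := Module.finBasisOfFinrankEq (ZMod 2) (Additive H) hrank
  let E : Additive H ≃ₗ[ZMod 2] Vec := b.equivFun
  let v : ZMod 7 → Vec := fun j => E (Additive.ofMul (h j))
  have hE0 : ∀ x : H, E (Additive.ofMul x) = 0 ↔ x = 1 := by
    intro x
    rw [LinearEquiv.map_eq_zero_iff]
    exact Iff.rfl
  have hEmul : ∀ x y : H, E (Additive.ofMul (x * y))
      = E (Additive.ofMul x) + E (Additive.ofMul y) := by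
    intro x y
    rw [ofMul_mul, map_add]
  have hEbij : Set.BijOn (fun x : H => E (Additive.ofMul x)) {x : H | x ≠ 1} {x : Vec | x ≠ 0} := by
    refine ⟨?_, ?_, ?_⟩
    · intro x hx
      simp only [Set.mem_setOf_eq] at hx ⊢
      rw [Ne, hE0]
      exact hx
    · intro x _ y _ hxy
      exact Additive.ofMul.injective (E.injective hxy)
    · intro y hy
      simp only [Set.mem_setOf_eq] at hy
      refine ⟨Additive.toMul (E.symm y), ?_, ?_⟩
      · simp only [Set.mem_setOf_eq]
        intro hc
        apply hy
        have h1 : E.symm y = 0 := toMul_eq_one.mp hc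
        have h2 : y = E (E.symm y) := (E.apply_symm_apply y).symm
        rw [h2, h1, map_zero]
      · exact E.apply_symm_apply y
  have hvbij : Set.BijOn v Set.univ {x : Vec | x ≠ 0} := hEbij.comp hbij
  -- Step 2: kernels S w
  let S : Vec → Finset (ZMod 7) := fun w => Finset.univ.filter (fun j => dot w (v j) = 0)
  have hScard : ∀ w : Vec, w ≠ 0 → (S w).card = 3 := by
    intro w hw
    exact (transfer hvbij (fun x => dot w x = 0)).trans (Dcount1 w hw)
  have hSint : ∀ w w' : Vec, w ≠ 0 → w' ≠ 0 → w ≠ w' → (S w ∩ S w').card = 1 := by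
    intro w w' hw hw' hne
    have heq : S w ∩ S w'
        = Finset.univ.filter (fun j => dot w (v j) = 0 ∧ dot w' (v j) = 0) :=
      (Finset.filter_and _ _ _).symm
    rw [heq, transfer hvbij (fun x => dot w x = 0 ∧ dot w' x = 0)]
    exact Dcount2 w w' hw hw' hne
  have hSne : ∀ w w' : Vec, w ≠ 0 → w' ≠ 0 → w ≠ w' → S w ≠ S w' := by
    intro w w' hw hw' hne he
    have h1 := hSint w w' hw hw' hne
    rw [he, Finset.inter_self, hScard w' hw'] at h1
    omega
  -- Step 3: each S w is a planar difference set
  have hSds : ∀ w : Vec, w ≠ 0 → ∀ i : ZMod 7, i ≠ 0 →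
      ((S w).filter fun j => j + i ∈ S w).card = 1 := by
    intro w hw i hi
    have htr : Set.BijOn (fun j : ZMod 7 => j + i) Set.univ Set.univ := by
      refine ⟨fun a _ => Set.mem_univ _, fun a _ b _ hab => by
        exact add_right_cancel hab, fun x _ => ⟨x - i, Set.mem_univ _, by ring⟩⟩
    have htrans : Set.BijOn (fun j : ZMod 7 => v (j + i)) Set.univ {x : Vec | x ≠ 0} :=
      hvbij.comp htr
    have hsum : Set.BijOn (fun j : ZMod 7 => v j + v (j + i)) Set.univ {x : Vec | x ≠ 0} := by
      have hfe : (fun j : ZMod 7 => v j + v (j + i))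
          = fun j : ZMod 7 => E (Additive.ofMul (h j * h (j + i))) := by
        funext j
        rw [hEmul]
      rw [hfe]
      exact hEbij.comp (hprod i hi)
    -- counts
    have nP : (Finset.univ.filter fun j : ZMod 7 => dot w (v j) = 0).card = 3 :=
      (transfer hvbij (fun x => dot w x = 0)).trans (Dcount1 w hw)
    have nPi : (Finset.univ.filter fun j : ZMod 7 => dot w (v (j + i)) = 0).card = 3 :=
      (transfer htrans (fun x => dot w x = 0)).trans (Dcount1 w hw)
    have nQ : (Finset.univ.filter fun j : ZMod 7 => dot w (v j + v (j + i)) = 0).card = 3 :=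
      (transfer hsum (fun x => dot w x = 0)).trans (Dcount1 w hw)
    -- split
    have e1 : (Finset.univ.filter fun j : ZMod 7 => dot w (v j) = 0 ∧ dot w (v (j + i)) = 0).card
        + (Finset.univ.filter fun j : ZMod 7 => dot w (v j) = 0 ∧ ¬ dot w (v (j + i)) = 0).card
        = 3 := by
      rw [← Finset.filter_filter, ← Finset.filter_filter]
      rw [Finset.card_filter_add_card_filter_not (fun j => dot w (v (j + i)) = 0)]
      exact nP
    have e2 : (Finset.univ.filter fun j : ZMod 7 => ¬ dot w (v j) = 0 ∧ dot w (v (j + i)) = 0).card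
        + (Finset.univ.filter fun j : ZMod 7 => ¬ dot w (v j) = 0 ∧ ¬ dot w (v (j + i)) = 0).card
        = 4 := by
      rw [← Finset.filter_filter, ← Finset.filter_filter]
      rw [Finset.card_filter_add_card_filter_not (fun j => dot w (v (j + i)) = 0)]
      have := Finset.card_filter_add_card_filter_not
        (s := (Finset.univ : Finset (ZMod 7))) (fun j => dot w (v j) = 0)
      rw [nP, Finset.card_univ] at this
      simp only [ZMod.card] at this
      omega
    have e3 : (Finset.univ.filter fun j : ZMod 7 => dot w (v j) = 0 ∧ dot w (v (j + i)) = 0).card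
        + (Finset.univ.filter fun j : ZMod 7 => ¬ dot w (v j) = 0 ∧ dot w (v (j + i)) = 0).card
        = 3 := by
      have hsplit := Finset.card_filter_add_card_filter_not
        (s := Finset.univ.filter fun j : ZMod 7 => dot w (v (j + i)) = 0)
        (fun j => dot w (v j) = 0)
      rw [Finset.filter_filter, Finset.filter_filter, nPi] at hsplit
      have hc1 : (Finset.univ.filter fun j : ZMod 7 => dot w (v (j + i)) = 0 ∧ dot w (v j) = 0)
          = (Finset.univ.filter fun j : ZMod 7 => dot w (v j) = 0 ∧ dot w (v (j + i)) = 0) :=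
        Finset.filter_congr (fun j _ => and_comm)
      have hc2 : (Finset.univ.filter fun j : ZMod 7 => dot w (v (j + i)) = 0 ∧ ¬ dot w (v j) = 0)
          = (Finset.univ.filter fun j : ZMod 7 => ¬ dot w (v j) = 0 ∧ dot w (v (j + i)) = 0) :=
        Finset.filter_congr (fun j _ => and_comm)
      rw [hc1, hc2] at hsplit
      exact hsplit
    have e4 : (Finset.univ.filter fun j : ZMod 7 => dot w (v j) = 0 ∧ dot w (v (j + i)) = 0).card
        + (Finset.univ.filter fun j : ZMod 7 => ¬ dot w (v j) = 0 ∧ ¬ dot w (v (j + i)) = 0).card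
        = 3 := by
      have hcg : (Finset.univ.filter fun j : ZMod 7 => dot w (v j + v (j + i)) = 0)
          = Finset.univ.filter fun j : ZMod 7 =>
              (dot w (v j) = 0 ∧ dot w (v (j + i)) = 0)
              ∨ (¬ dot w (v j) = 0 ∧ ¬ dot w (v (j + i)) = 0) := by
        apply Finset.filter_congr
        intro j _
        rw [dot_add, Dzmod2]
        tauto
      rw [hcg, Finset.filter_or, Finset.card_union_of_disjoint] at nQ
      · exact nQ
      · rw [Finset.disjoint_left]
        intro a ha hb
        rw [Finset.mem_filter] at ha hb
        tauto
    -- conclude a = 1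
    have hgoal : ((S w).filter fun j => j + i ∈ S w)
        = Finset.univ.filter fun j : ZMod 7 => dot w (v j) = 0 ∧ dot w (v (j + i)) = 0 := by
      rw [Finset.filter_filter]
      apply Finset.filter_congr
      intro j _
      simp only [S, Finset.mem_filter, Finset.mem_univ, true_and]
    rw [hgoal]
    omega
  -- Step 4: dichotomy
  let F : Finset (Finset (ZMod 7)) := (Finset.univ.filter fun w : Vec => w ≠ 0).image S
  have hFmem : ∀ s ∈ F, ∃ w : Vec, w ≠ 0 ∧ S w = s := by
    intro s hs
    rw [Finset.mem_image] at hs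
    obtain ⟨w, hw, hws⟩ := hs
    rw [Finset.mem_filter] at hw
    exact ⟨w, hw.2, hws⟩
  have hFcard : 7 ≤ F.card := by
    rw [Finset.card_image_of_injOn, Dvecsz]
    intro w hw w' hw' he
    rw [Finset.coe_filter, Set.mem_setOf_eq] at hw hw'
    by_contra hne
    exact hSne w w' hw.2 hw'.2 hne he
  have hdich := dichotomy F hFcard
    (by
      intro s hs
      obtain ⟨w, hw, rfl⟩ := hFmem s hs
      exact Dclass (S w) (hScard w hw) (hSds w hw))
    (by
      intro s hs t ht hne
      obtain ⟨w, hw, rfl⟩ := hFmem s hs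
      obtain ⟨w', hw', rfl⟩ := hFmem t ht
      exact hSint w w' hw hw' (fun he => hne (by rw [he])))
  -- Step 5: shift property
  have hshift : ∀ w : Vec, w ≠ 0 → ∃ w' : Vec, w' ≠ 0 ∧
      ∀ j : ZMod 7, (dot w' (v j) = 0 ↔ dot w (v (j + 1)) = 0) := by
    have hSmemF : ∀ w : Vec, w ≠ 0 → S w ∈ F := by
      intro w hw
      exact Finset.mem_image_of_mem S (Finset.mem_filter.mpr ⟨Finset.mem_univ _, hw⟩)
    rcases hdich with hall | hall
    · -- all good1
      intro w hw
      have hsurj : ∀ δ : ZMod 7, ∃ u : Vec, u ≠ 0 ∧ rep1 (S u) = δ := by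
        have himg : ((Finset.univ.filter fun u : Vec => u ≠ 0).image (fun u => rep1 (S u)))
            = Finset.univ := by
          apply Finset.eq_univ_of_card
          rw [Finset.card_image_of_injOn]
          · rw [Dvecsz]; rfl
          · intro u hu u' hu' he
            rw [Finset.coe_filter, Set.mem_setOf_eq] at hu hu'
            by_contra hne
            apply hSne u u' hu.2 hu'.2 hne
            have he' : rep1 (S u) = rep1 (S u') := he
            rw [rep1_spec (hall _ (hSmemF u hu.2)), rep1_spec (hall _ (hSmemF u' hu'.2)), he']
        intro δ
        have : δ ∈ ((Finset.univ.filter fun u : Vec => u ≠ 0).image (fun u => rep1 (S u))) := by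
          rw [himg]; exact Finset.mem_univ δ
        rw [Finset.mem_image] at this
        obtain ⟨u, hu, hur⟩ := this
        rw [Finset.mem_filter] at hu
        exact ⟨u, hu.2, hur⟩
      set t := rep1 (S w) with ht
      obtain ⟨w', hw', hw't⟩ := hsurj (t - 1)
      refine ⟨w', hw', ?_⟩
      intro j
      have hSw : S w = {t, t+1, t+3} := rep1_spec (hall _ (hSmemF w hw))
      have hSw' : S w' = {t-1, (t-1)+1, (t-1)+3} := by
        rw [← hw't]; exact rep1_spec (hall _ (hSmemF w' hw'))
      have hmem1 : dot w' (v j) = 0 ↔ j ∈ S w' := by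
        simp only [S, Finset.mem_filter, Finset.mem_univ, true_and]
      have hmem2 : dot w (v (j + 1)) = 0 ↔ j + 1 ∈ S w := by
        simp only [S, Finset.mem_filter, Finset.mem_univ, true_and]
      rw [hmem1, hmem2, hSw, hSw']
      have ha1 : (t-1)+1 = t := by ring
      have ha2 : (t-1)+3 = t+2 := by ring
      rw [ha1, ha2]
      exact Dshift1 t j
    · -- all good2
      intro w hw
      have hsurj : ∀ δ : ZMod 7, ∃ u : Vec, u ≠ 0 ∧ rep2 (S u) = δ := by
        have himg : ((Finset.univ.filter fun u : Vec => u ≠ 0).image (fun u => rep2 (S u)))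
            = Finset.univ := by
          apply Finset.eq_univ_of_card
          rw [Finset.card_image_of_injOn]
          · rw [Dvecsz]; rfl
          · intro u hu u' hu' he
            rw [Finset.coe_filter, Set.mem_setOf_eq] at hu hu'
            by_contra hne
            apply hSne u u' hu.2 hu'.2 hne
            have he' : rep2 (S u) = rep2 (S u') := he
            rw [rep2_spec (hall _ (hSmemF u hu.2)), rep2_spec (hall _ (hSmemF u' hu'.2)), he']
        intro δ
        have : δ ∈ ((Finset.univ.filter fun u : Vec => u ≠ 0).image (fun u => rep2 (S u))) := by
          rw [himg]; exact Finset.mem_univ δ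
        rw [Finset.mem_image] at this
        obtain ⟨u, hu, hur⟩ := this
        rw [Finset.mem_filter] at hu
        exact ⟨u, hu.2, hur⟩
      set t := rep2 (S w) with ht
      obtain ⟨w', hw', hw't⟩ := hsurj (t - 1)
      refine ⟨w', hw', ?_⟩
      intro j
      have hSw : S w = {t, t+2, t+3} := rep2_spec (hall _ (hSmemF w hw))
      have hSw' : S w' = {t-1, (t-1)+2, (t-1)+3} := by
        rw [← hw't]; exact rep2_spec (hall _ (hSmemF w' hw'))
      have hmem1 : dot w' (v j) = 0 ↔ j ∈ S w' := by
        simp only [S, Finset.mem_filter, Finset.mem_univ, true_and]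
      have hmem2 : dot w (v (j + 1)) = 0 ↔ j + 1 ∈ S w := by
        simp only [S, Finset.mem_filter, Finset.mem_univ, true_and]
      rw [hmem1, hmem2, hSw, hSw']
      have ha1 : (t-1)+2 = t+1 := by ring
      have ha2 : (t-1)+3 = t+2 := by ring
      rw [ha1, ha2]
      exact Dshift2 t j
  -- Step 6: KEY lemma
  have hvv : ∀ z : Vec, z + z = 0 := by
    intro z
    funext k
    exact (by decide : ∀ a : ZMod 2, a + a = 0) (z k)
  have key : ∀ a c d : ZMod 7, h a * h c = h d → h (a+1) * h (c+1) = h (d+1) := by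
    intro a c d habc
    have hv : v a + v c = v d := by
      have := congrArg (fun x : H => E (Additive.ofMul x)) habc
      rw [hEmul] at this
      exact this
    have hz : v (a+1) + v (c+1) + v (d+1) = 0 := by
      apply Dsep
      intro w hw
      obtain ⟨w', hw', hww⟩ := hshift w hw
      have hdw : ∀ x : ZMod 7, dot w (v (x + 1)) = dot w' (v x) :=
        fun x => (Dzmod2' _ _ (hww x)).symm
      rw [dot_add, dot_add, hdw a, hdw c, hdw d]
      rw [← dot_add, hv, ← dot_add, hvv]
      simp [dot]
    have hv' : v (a+1) + v (c+1) = v (d+1) := by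
      calc v (a+1) + v (c+1) = (v (a+1) + v (c+1) + v (d+1)) + v (d+1) := by
            rw [add_assoc _ (v (d+1)) (v (d+1)), hvv, add_zero]
        _ = 0 + v (d+1) := by rw [hz]
        _ = v (d+1) := zero_add _
    have hEe : E (Additive.ofMul (h (a+1) * h (c+1))) = E (Additive.ofMul (h (d+1))) := by
      rw [hEmul]
      exact hv'
    exact Additive.ofMul.injective (E.injective hEe)
  -- Step 7: build the automorphism
  haveI := Classical.decEq H
  let g : H → ZMod 7 := Function.invFunOn h Set.univ
  have hInv : Set.InvOn g h Set.univ {x : H | x ≠ 1} := hbij.invOn_invFunOn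
  have hgh : ∀ j : ZMod 7, g (h j) = j := fun j => hInv.1 (Set.mem_univ j)
  have hhg : ∀ x : H, x ≠ 1 → h (g x) = x := fun x hx => hInv.2 hx
  let σ : H → H := fun x => if x = 1 then 1 else h (g x + 1)
  have hne1' : ∀ j : ZMod 7, h j ≠ 1 := fun j => hbij.mapsTo (Set.mem_univ j)
  have hσh : ∀ j : ZMod 7, σ (h j) = h (j + 1) := by
    intro j
    simp only [σ, if_neg (hne1' j), hgh]
  have hσ1 : σ 1 = 1 := if_pos rfl
  have hne1 : ∀ x : H, x ≠ 1 → σ x ≠ 1 := by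
    intro x hx
    simp only [σ, if_neg hx]
    exact hne1' _
  have hmul : ∀ x y : H, σ (x * y) = σ x * σ y := by
    intro x y
    by_cases hx : x = 1
    · rw [hx, one_mul, hσ1, one_mul]
    by_cases hy : y = 1
    · rw [hy, mul_one, hσ1, mul_one]
    by_cases hxy : x = y
    · rw [← hxy, hexp x, hσ1]
      have : σ x * σ x = 1 := hexp (σ x)
      rw [hxy] at this ⊢
      rw [← hxy] at this ⊢
      exact this.symm
    · have hxy1 : x * y ≠ 1 := by
        intro hcontra
        exact hxy (mul_left_cancel ((hexp x).trans hcontra.symm))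
      have hk : h (g x) * h (g y) = h (g (x * y)) := by
        rw [hhg x hx, hhg y hy, hhg _ hxy1]
      have hkey := key _ _ _ hk
      simp only [σ, if_neg hx, if_neg hy, if_neg hxy1]
      exact hkey.symm
  have hinj : Function.Injective σ := by
    intro x y hxy2
    by_cases hx : x = 1 <;> by_cases hy : y = 1
    · rw [hx, hy]
    · exact absurd hxy2.symm (by rw [hx, hσ1]; exact hne1 y hy)
    · exact absurd hxy2 (by rw [hy, hσ1]; exact hne1 x hx)
    · simp only [σ, if_neg hx, if_neg hy] at hxy2
      have h1 := hbij.injOn (Set.mem_univ _) (Set.mem_univ _) hxy2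
      have h2 : g x = g y := add_right_cancel h1
      rw [← hhg x hx, ← hhg y hy, h2]
  let φ : H →* H := MonoidHom.mk' σ hmul
  have hbijσ : Function.Bijective σ := Finite.injective_iff_bijective.mp hinj
  exact ⟨MulEquiv.ofBijective φ hbijσ, fun i => hσh i⟩
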